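/- A graph has a sink-free orientation if and only if no connected component of it is a tree. Equivalently: a finite simple undirected graph G admits an orientation of its edges in which every vertex has out-degree at least 1 if and only if every connected component of G contains a cycle. -/

import Mathlib

open SimpleGraph

private def iterWalk {V : Type*} (G : SimpleGraph V) (f : V → V) (hf : ∀ x, G.Adj x (f x)) :
    (x : V) → (k : ℕ) → G.Walk x (f^[k] x)
  | _, 0 => SimpleGraph.Walk.nil
  | x, k + 1 =>
      SimpleGraph.Walk.cons (hf x)
        ((iterWalk G f hf (f x) k).copy rfl (Function.iterate_succ_apply f k x).symm)

private lemma iterWalk_support {V : Type*} (G : SimpleGraph V) (f : V → V)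
    (hf : ∀ x, G.Adj x (f x)) :
    ∀ (x : V) (k : ℕ),
      (iterWalk G f hf x k).support = (List.range (k + 1)).map (fun i => f^[i] x)
  | x, 0 => by simp [iterWalk]
  | x, k + 1 => by
      simp only [iterWalk, Walk.support_cons, Walk.support_copy,
        iterWalk_support G f hf (f x) k, List.range_succ_eq_map, List.map_cons, List.map_map]
      simp [Function.comp, Function.iterate_succ_apply]

private lemma iterWalk_edges {V : Type*} (G : SimpleGraph V) (f : V → V)
    (hf : ∀ x, G.Adj x (f x)) :
    ∀ (x : V) (k : ℕ),
      (iterWalk G f hf x k).edges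
        = (List.range k).map (fun i => s(f^[i] x, f^[i + 1] x))
  | x, 0 => by simp [iterWalk]
  | x, k + 1 => by
      simp only [iterWalk, Walk.edges_cons, Walk.edges_copy,
        iterWalk_edges G f hf (f x) k, List.range_succ_eq_map, List.map_cons, List.map_map]
      simp [Function.comp, Function.iterate_succ_apply]

private lemma exists_succ {V : Type*} (G : SimpleGraph V)
    (h : ∀ v : V, ∃ u, G.Reachable v u ∧ ∃ p : G.Walk u u, p.IsCycle) :
    ∃ s : V → V, (∀ v, G.Adj v (s v)) ∧ ∀ v, s (s v) ≠ v := by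
  classical
  have H : ∀ c : G.ConnectedComponent, ∃ x : (u : V) × G.Walk u u,
      G.Reachable (Quot.out c) x.1 ∧ x.2.IsCycle := by
    intro c
    obtain ⟨u, hru, p, hp⟩ := h (Quot.out c)
    exact ⟨⟨u, p⟩, hru, hp⟩
  choose W hW using H
  have hreach : ∀ v : V, G.Reachable v (W (G.connectedComponentMk v)).1 := by
    intro v
    refine Reachable.trans ?_ (hW (G.connectedComponentMk v)).1
    have h1 : G.connectedComponentMk (Quot.out (G.connectedComponentMk v))
        = G.connectedComponentMk v := Quot.out_eq _
    exact (ConnectedComponent.exact h1).symm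
  let A : V → Set ℕ := fun v =>
    {n | ∃ x, x ∈ (W (G.connectedComponentMk v)).2.support ∧ ∃ q : G.Walk v x, q.length = n}
  have hAne : ∀ v, (A v).Nonempty := by
    intro v
    obtain ⟨q⟩ := hreach v
    exact ⟨q.length, (W (G.connectedComponentMk v)).1, Walk.end_mem_support _, q, rfl⟩
  let D : V → ℕ := fun v => sInf (A v)
  have hDmem : ∀ v, D v ∈ A v := fun v => Nat.sInf_mem (hAne v)
  have hcompadj : ∀ {a b : V}, G.Adj a b →
      G.connectedComponentMk b = G.connectedComponentMk a :=
    fun hab => (SimpleGraph.ConnectedComponent.sound hab.reachable).symm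
  have key : ∀ v, ∃ w, G.Adj v w ∧
      ((D v = 0 ∧ D w = 0 ∧ ∃ d : G.Dart, d.toProd = (v, w) ∧
          d ∈ (W (G.connectedComponentMk v)).2.darts)
        ∨ D w < D v) := by
    intro v
    obtain ⟨x, hx, q, hq⟩ := hDmem v
    rcases Nat.eq_zero_or_pos (D v) with h0 | hpos
    · have hvx : v = x := Walk.eq_of_length_eq_zero (by rw [hq, h0])
      subst hvx
      have hcyc := (hW (G.connectedComponentMk v)).2
      have hnn : ¬ ((W (G.connectedComponentMk v)).2.rotate v hx).Nil := by
        rw [Walk.nil_iff_length_eq]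
        have h3 := (hcyc.rotate hx).three_le_length
        omega
      obtain ⟨w, hadj, q', hq'⟩ := Walk.not_nil_iff.mp hnn
      have hd : (⟨(v, w), hadj⟩ : G.Dart) ∈ ((W (G.connectedComponentMk v)).2.rotate v hx).darts := by
        rw [hq', Walk.darts_cons]
        exact List.mem_cons_self
      have hdmem : (⟨(v, w), hadj⟩ : G.Dart) ∈ (W (G.connectedComponentMk v)).2.darts :=
        (List.IsRotated.perm (Walk.rotate_darts _ _ hx)).subset hd
      have hwsupp : w ∈ (W (G.connectedComponentMk v)).2.support :=
        Walk.dart_snd_mem_support_of_mem_darts _ hdmem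
      have hDw : D w = 0 := by
        have hmem : (0 : ℕ) ∈ A w := by
          refine ⟨w, ?_, Walk.nil, rfl⟩
          rw [hcompadj hadj]
          exact hwsupp
        exact Nat.le_antisymm (Nat.sInf_le hmem) (Nat.zero_le _)
      exact ⟨w, hadj, Or.inl ⟨h0, hDw, ⟨(v, w), hadj⟩, rfl, hdmem⟩⟩
    · obtain ⟨b, hadj, q', hq2⟩ : ∃ (b : V) (hadj : G.Adj v b) (q' : G.Walk b x),
          q = Walk.cons hadj q' := by
        apply Walk.not_nil_iff.mp
        rw [Walk.nil_iff_length_eq, hq]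
        omega
      rw [hq2, Walk.length_cons] at hq
      refine ⟨b, hadj, Or.inr ?_⟩
      have hle : D b ≤ q'.length := by
        apply Nat.sInf_le
        refine ⟨x, ?_, q', rfl⟩
        rw [hcompadj hadj]
        exact hx
      omega
  choose s hs hP using key
  refine ⟨s, hs, ?_⟩
  intro v heq
  rcases hP v with ⟨hv0, hw0, d, hd, hdm⟩ | hlt
  · rcases hP (s v) with ⟨_, _, d', hd', hdm'⟩ | hlt'
    · rw [hcompadj (hs v)] at hdm'
      rw [heq] at hd'
      have hnd : ((W (G.connectedComponentMk v)).2.edges).Nodup :=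
        (hW (G.connectedComponentMk v)).2.isCircuit.isTrail.edges_nodup
      have hinj := List.inj_on_of_nodup_map (l := (W (G.connectedComponentMk v)).2.darts)
        (f := SimpleGraph.Dart.edge) hnd
      have hde : d.edge = d'.edge := by
        unfold Dart.edge
        rw [hd, hd']
        exact Sym2.eq_swap
      have hdd : d = d' := hinj hdm hdm' hde
      rw [hdd, hd'] at hd
      have : s v = v := (Prod.mk.injEq _ _ _ _ ▸ hd).1
      exact (hs v).ne' this
    · rw [hw0] at hlt'
      omega
  · rcases hP (s v) with ⟨h0, h0', _⟩ | hlt'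
    · rw [heq] at h0'
      omega
    · rw [heq] at hlt'
      omega

/-- A finite simple graph admits a sink-free orientation (each edge gets exactly one
direction and every vertex has out-degree at least 1) if and only if every connected
component contains a cycle (i.e. no component is a tree). -/
theorem sink_free_orientation_iff_no_tree_component {V : Type*} [Fintype V]
    (G : SimpleGraph V) :
    (∃ σ : V → V → Prop,
        (∀ u v, σ u v → G.Adj u v) ∧
        (∀ u v, G.Adj u v → (σ u v ↔ ¬ σ v u)) ∧
        (∀ v, ∃ u, σ v u)) ↔
      (∀ v : V, ∃ u, G.Reachable v u ∧ ∃ p : G.Walk u u, p.IsCycle) := by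
  classical
  constructor
  · rintro ⟨σ, hσadj, hσasym, hσout⟩ v
    choose f hf using hσout
    have hadjf : ∀ x, G.Adj x (f x) := fun x => hσadj _ _ (hf x)
    have hff : ∀ x, f (f x) ≠ x := by
      intro x hx
      have h2 := hf (f x)
      rw [hx] at h2
      exact (hσasym x (f x) (hadjf x)).mp (hf x) h2
    have hreach : ∀ (x : V) (k : ℕ), G.Reachable x (f^[k] x) := by
      intro x k
      induction k with
      | zero => exact Reachable.refl x
      | succ k ih =>
          rw [Function.iterate_succ_apply']
          exact ih.trans (hadjf _).reachable
    obtain ⟨i, j, hij, hfij⟩ :=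
      Fintype.exists_ne_map_eq_of_card_lt
        (fun i : Fin (Fintype.card V + 1) => f^[(i : ℕ)] v) (by simp)
    obtain ⟨i, j, hlt, hfij⟩ : ∃ i j : ℕ, i < j ∧ f^[i] v = f^[j] v := by
      rcases lt_or_gt_of_ne hij with hc | hc
      · exact ⟨i, j, hc, hfij⟩
      · exact ⟨j, i, hc, hfij.symm⟩
    set a := f^[i] v with ha
    have hper : f^[j - i] a = a := by
      rw [ha, ← Function.iterate_add_apply]
      have hji : j - i + i = j := by omega
      rw [hji, ← hfij]
    have hQ : ∃ n, 0 < n ∧ f^[n] a = a := ⟨j - i, by omega, hper⟩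
    set n := Nat.find hQ with hn_def
    have hn := Nat.find_spec hQ
    have hmin : ∀ m, m < n → ¬(0 < m ∧ f^[m] a = a) := fun m hm => Nat.find_min hQ hm
    have hdist : ∀ p q : ℕ, p < q → q ≤ n → f^[p] a = f^[q] a → p = 0 ∧ q = n := by
      intro p q hpq hqn he
      have h1 : f^[n - q + p] a = a := by
        rw [Function.iterate_add_apply, he, ← Function.iterate_add_apply]
        have hq' : n - q + q = n := by omega
        rw [hq']
        exact hn.2
      by_contra hcon
      have hpos : 0 < n - q + p := by omega
      exact hmin (n - q + p) (by omega) ⟨hpos, h1⟩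
    have hn3 : 3 ≤ n := by
      have hne1 : f^[1] a ≠ a := by
        intro h1
        rw [Function.iterate_one] at h1
        have := hadjf a
        rw [h1] at this
        exact G.irrefl this
      have hne2 : f^[2] a ≠ a := by
        intro h2
        exact hff a h2
      have h0 : n ≠ 0 := by omega
      have h1 : n ≠ 1 := fun hh => hne1 (hh ▸ hn.2)
      have h2 : n ≠ 2 := fun hh => hne2 (hh ▸ hn.2)
      omega
    have hend : f^[n - 1] (f a) = a := by
      have h1 : n - 1 + 1 = n := by omega
      calc f^[n - 1] (f a) = f^[n - 1 + 1] a := (Function.iterate_succ_apply f (n - 1) a).symm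
        _ = a := by rw [h1]; exact hn.2
    let W' : G.Walk (f a) a := (iterWalk G f hadjf (f a) (n - 1)).copy rfl hend
    have hsupp : W'.support = (List.range n).map (fun i => f^[i] (f a)) := by
      show ((iterWalk G f hadjf (f a) (n - 1)).copy rfl hend).support = _
      rw [Walk.support_copy, iterWalk_support]
      have h1 : n - 1 + 1 = n := by omega
      rw [h1]
    have hedges : W'.edges = (List.range (n - 1)).map (fun i => s(f^[i] (f a), f^[i+1] (f a))) := by
      show ((iterWalk G f hadjf (f a) (n - 1)).copy rfl hend).edges = _
      rw [Walk.edges_copy, iterWalk_edges]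
    have hpath : W'.IsPath := by
      apply Walk.IsPath.mk'
      rw [hsupp]
      apply List.Nodup.map_on ?_ List.nodup_range
      intro p hp q hq he
      simp only [List.mem_range] at hp hq
      have he' : f^[p + 1] a = f^[q + 1] a := by
        rw [Function.iterate_succ_apply, Function.iterate_succ_apply]
        exact he
      rcases lt_trichotomy p q with hc | hc | hc
      · exact absurd (hdist (p + 1) (q + 1) (by omega) (by omega) he').1 (by omega)
      · exact hc
      · exact absurd (hdist (q + 1) (p + 1) (by omega) (by omega) he'.symm).1 (by omega)
    have hedge : s(a, f a) ∉ W'.edges := by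
      rw [hedges]
      intro hmem
      simp only [List.mem_map, List.mem_range] at hmem
      obtain ⟨k, hk, he⟩ := hmem
      have e1 : f^[k] (f a) = f^[k + 1] a := (Function.iterate_succ_apply f k a).symm
      have e2 : f^[k + 1] (f a) = f^[k + 2] a := (Function.iterate_succ_apply f (k + 1) a).symm
      rw [e1, e2, Sym2.eq_iff] at he
      rcases he with ⟨h1, h2⟩ | ⟨h1, h2⟩
      · exact hmin (k + 1) (by omega) ⟨by omega, h1⟩
      · have h2' : f^[0] a = f^[k + 2] a := by
          simpa using h2.symm
        have hk1 := hdist 0 (k + 2) (by omega) (by omega) h2'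
        have h1' : f^[1] a = f^[k + 1] a := by
          simpa using h1.symm
        exact absurd (hdist 1 (k + 1) (by omega) (by omega) h1').1 (by omega)
    have hcyc : (Walk.cons (hadjf a) W').IsCycle :=
      (Walk.cons_isCycle_iff W' (hadjf a)).mpr ⟨hpath, hedge⟩
    exact ⟨a, hreach v i, Walk.cons (hadjf a) W', hcyc⟩
  · intro h
    obtain ⟨s, hs, hss⟩ := exists_succ G h
    let e := Fintype.equivFin V
    refine ⟨fun a b => G.Adj a b ∧ (s a = b ∨ (s b ≠ a ∧ e a < e b)),
      fun u v hw => hw.1, ?_, fun v => ⟨s v, hs v, Or.inl rfl⟩⟩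
    intro u v huv
    constructor
    · rintro ⟨-, h1⟩ ⟨-, h2⟩
      rcases h1 with h1 | ⟨h1a, h1b⟩ <;> rcases h2 with h2 | ⟨h2a, h2b⟩
      · exact hss u (by rw [h1]; exact h2)
      · exact h2a h1
      · exact h1a h2
      · exact absurd h2b (not_lt.mpr (le_of_lt h1b))
    · intro hn
      refine ⟨huv, ?_⟩
      by_cases h1 : s u = v
      · exact Or.inl h1
      have h2 : ¬ (s v = u ∨ (s u ≠ v ∧ e v < e u)) := fun hx => hn ⟨huv.symm, hx⟩
      push_neg at h2
      obtain ⟨h3, h4⟩ := h2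
      refine Or.inr ⟨h3, ?_⟩
      have h5 : e u ≠ e v := fun hx => huv.ne (e.injective hx)
      exact (h4 h1).lt_of_ne h5
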